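/- The function y(x) = csc(π/x) is strictly convex on the interval (2, ∞); equivalently, its second derivative is positive for all x > 2. -/

import Mathlib

open Real

-- key inequality: for 0 < u < π/2, 2 sin u cos u < u (1 + cos u ^ 2)
lemma key_ineq {u : ℝ} (h1 : 0 < u) (h2 : u < π / 2) :
    2 * Real.sin u * Real.cos u < u * (1 + Real.cos u ^ 2) := by
  set g : ℝ → ℝ := fun u => u * (1 + Real.cos u ^ 2) - 2 * Real.sin u * Real.cos u with hg
  have hmono : StrictMonoOn g (Set.Icc 0 (π / 2)) := by
    apply strictMonoOn_of_deriv_pos (convex_Icc _ _)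
    · fun_prop
    · intro v hv
      rw [interior_Icc] at hv
      obtain ⟨hv0, hv2⟩ := hv
      have hd : HasDerivAt g (3 * Real.sin v ^ 2 - 2 * v * Real.sin v * Real.cos v) v := by
        have ha :=
          (hasDerivAt_id v).mul ((hasDerivAt_const v (1:ℝ)).add ((Real.hasDerivAt_cos v).pow 2))
        have hb : HasDerivAt (fun u : ℝ => 2 * Real.sin u * Real.cos u)
            (2 * (Real.cos v * Real.cos v + Real.sin v * (-Real.sin v))) v := by
          have := ((Real.hasDerivAt_sin v).mul (Real.hasDerivAt_cos v)).const_mul (2:ℝ)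
          refine this.congr_of_eventuallyEq (Filter.Eventually.of_forall fun u => ?_)
          simp only [Pi.mul_apply]
          ring
        have := ha.sub hb
        refine this.congr_deriv ?_
        have hsc := Real.sin_sq_add_cos_sq v
        simp only [id_eq, Pi.add_apply, Pi.pow_apply]
        push_cast
        linear_combination -hsc
      rw [hd.deriv]
      have hs : 0 < Real.sin v := Real.sin_pos_of_pos_of_lt_pi hv0 (by linarith [Real.pi_pos])
      have hc : 0 < Real.cos v := Real.cos_pos_of_mem_Ioo ⟨by linarith, hv2⟩
      have ht : v < Real.tan v := Real.lt_tan hv0 hv2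
      rw [Real.tan_eq_sin_div_cos] at ht
      have hvc : v * Real.cos v < Real.sin v := by
        rw [lt_div_iff₀ hc] at ht; linarith
      nlinarith [mul_pos hs hs]
  have h0 : g 0 = 0 := by simp [hg]
  have := hmono (Set.mem_Icc.2 ⟨le_refl 0, by linarith⟩) (Set.mem_Icc.2 ⟨h1.le, h2.le⟩) h1
  rw [h0] at this
  simp only [hg] at this
  linarith

theorem csc_strictConvexOn :
    StrictConvexOn ℝ (Set.Ioi (2 : ℝ)) (fun x : ℝ => 1 / Real.sin (π / x)) ∧
    ∀ x : ℝ, 2 < x → 0 < iteratedDeriv 2 (fun x : ℝ => 1 / Real.sin (π / x)) x := by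
  set f : ℝ → ℝ := fun x => 1 / Real.sin (π / x) with hf
  set f1 : ℝ → ℝ := fun x => π * Real.cos (π / x) / (x ^ 2 * Real.sin (π / x) ^ 2) with hf1
  have hpi := Real.pi_pos
  -- basic facts for x > 2
  have hbasic : ∀ x : ℝ, 2 < x → 0 < Real.sin (π / x) ∧ 0 < π / x ∧ π / x < π / 2 := by
    intro x hx
    have hx0 : (0:ℝ) < x := by linarith
    have h1 : 0 < π / x := div_pos hpi hx0
    have h2 : π / x < π / 2 := by
      rw [div_lt_div_iff₀ hx0 (by norm_num)]
      nlinarith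
    exact ⟨Real.sin_pos_of_pos_of_lt_pi h1 (by linarith), h1, h2⟩
  -- derivative of π/x
  have hdiv : ∀ x : ℝ, x ≠ 0 → HasDerivAt (fun x : ℝ => π / x) (-π / x ^ 2) x := by
    intro x hx
    have h := (hasDerivAt_inv hx).const_mul π
    rw [show (fun x : ℝ => π / x) = fun x => π * x⁻¹ from funext fun y => div_eq_mul_inv π y]
    refine h.congr_deriv ?_
    field_simp
  -- derivative of f on Ioi 2
  have hdf : ∀ x : ℝ, 2 < x → HasDerivAt f (f1 x) x := by
    intro x hx
    obtain ⟨hs, _, _⟩ := hbasic x hx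
    have hx0 : x ≠ 0 := by positivity
    have h1 := hdiv x hx0
    have hsin : HasDerivAt (fun x : ℝ => Real.sin (π / x)) (Real.cos (π / x) * (-π / x ^ 2)) x :=
      (Real.hasDerivAt_sin (π / x)).comp x h1
    have := hsin.inv hs.ne'
    have heq : f = fun x : ℝ => (Real.sin (π / x))⁻¹ := by
      funext y; simp [hf, one_div]
    rw [heq]
    refine this.congr_deriv ?_
    simp only [hf1]
    field_simp
  -- derivative of f1 at x > 2
  have hdf1 : ∀ x : ℝ, 2 < x → HasDerivAt f1
      (π * (π * Real.sin (π / x) ^ 2 + 2 * π * Real.cos (π / x) ^ 2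
        - 2 * x * Real.sin (π / x) * Real.cos (π / x)) / (x ^ 4 * Real.sin (π / x) ^ 3)) x := by
    intro x hx
    obtain ⟨hs, _, _⟩ := hbasic x hx
    have hx0 : (0:ℝ) < x := by linarith
    have hxne : x ≠ 0 := hx0.ne'
    have h1 := hdiv x hxne
    have hsin : HasDerivAt (fun x : ℝ => Real.sin (π / x)) (Real.cos (π / x) * (-π / x ^ 2)) x :=
      (Real.hasDerivAt_sin (π / x)).comp x h1
    have hcos : HasDerivAt (fun x : ℝ => Real.cos (π / x)) (-Real.sin (π / x) * (-π / x ^ 2)) x :=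
      (Real.hasDerivAt_cos (π / x)).comp x h1
    have hnum : HasDerivAt (fun x : ℝ => π * Real.cos (π / x))
        (π * (-Real.sin (π / x) * (-π / x ^ 2))) x := hcos.const_mul π
    have hden : HasDerivAt (fun x : ℝ => x ^ 2 * Real.sin (π / x) ^ 2)
        ((2 * x ^ 1) * Real.sin (π / x) ^ 2
          + x ^ 2 * (2 * Real.sin (π / x) ^ 1 * (Real.cos (π / x) * (-π / x ^ 2)))) x := by
      have hp : HasDerivAt (fun x : ℝ => x ^ 2) (2 * x ^ 1) x := by
        simpa using hasDerivAt_pow 2 x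
      exact hp.mul (hsin.pow 2)
    have hdenne : x ^ 2 * Real.sin (π / x) ^ 2 ≠ 0 := by positivity
    have := hnum.div hden hdenne
    refine this.congr_deriv ?_
    field_simp
    ring
  -- second derivative positivity
  have hpos : ∀ x : ℝ, 2 < x →
      0 < π * (π * Real.sin (π / x) ^ 2 + 2 * π * Real.cos (π / x) ^ 2
        - 2 * x * Real.sin (π / x) * Real.cos (π / x)) / (x ^ 4 * Real.sin (π / x) ^ 3) := by
    intro x hx
    obtain ⟨hs, hu0, hu2⟩ := hbasic x hx
    have hx0 : (0:ℝ) < x := by linarith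
    have hk := key_ineq hu0 hu2
    have hsc := Real.sin_sq_add_cos_sq (π / x)
    have hnum : 0 < π * Real.sin (π / x) ^ 2 + 2 * π * Real.cos (π / x) ^ 2
        - 2 * x * Real.sin (π / x) * Real.cos (π / x) := by
      have := mul_lt_mul_of_pos_left hk hx0
      rw [mul_comm] at this
      have hxu : x * (π / x) = π := by field_simp
      nlinarith [this]
    positivity
  -- deriv f = f1 on nbhd of points of Ioi 2
  have hderiv_eq : ∀ x : ℝ, 2 < x → deriv f =ᶠ[nhds x] f1 := by
    intro x hx
    filter_upwards [isOpen_Ioi.mem_nhds (Set.mem_Ioi.2 hx)] with y hy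
    exact (hdf y hy).deriv
  have hiter : ∀ x : ℝ, 2 < x → iteratedDeriv 2 f x
      = π * (π * Real.sin (π / x) ^ 2 + 2 * π * Real.cos (π / x) ^ 2
        - 2 * x * Real.sin (π / x) * Real.cos (π / x)) / (x ^ 4 * Real.sin (π / x) ^ 3) := by
    intro x hx
    rw [show (2:ℕ) = 1 + 1 from rfl, iteratedDeriv_succ, iteratedDeriv_one]
    rw [(hderiv_eq x hx).deriv_eq]
    exact (hdf1 x hx).deriv
  constructor
  · apply strictConvexOn_of_deriv2_pos (convex_Ioi 2)
    · apply ContinuousOn.div continuousOn_const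
      · apply Real.continuous_sin.comp_continuousOn
        exact continuousOn_const.div continuousOn_id (fun x hx => by
          have : (2:ℝ) < x := hx; positivity)
      · intro x hx
        exact (hbasic x hx).1.ne'
    · intro x hx
      rw [interior_Ioi] at hx
      have h2 : deriv^[2] f x = iteratedDeriv 2 f x := by
        rw [iteratedDeriv_eq_iterate]
      rw [h2, hiter x hx]
      exact hpos x hx
  · intro x hx
    rw [hiter x hx]
    exact hpos x hx
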